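/- Let 𝒢 ⊂ SL(d,ℝ) be a finite set. Then the semigroup generated by 𝒢 has a quasi-conformal branch if and only if there exists a nonempty set 𝒰 ⊂ SL(d,ℝ) with compact closure such that cl(𝒰) ⊂ 𝒢^{−1}𝒰. -/

import Mathlib

open Filter Topology Matrix Pointwise

namespace Paper

variable {𝒜 : Type*} [Fintype 𝒜] [DecidableEq 𝒜]

/-- The space of bi-infinite sequences over the alphabet `𝒜`. -/
abbrev Seq (𝒜 : Type*) := ℤ → 𝒜

/-- The left shift map. -/
def shift (x : Seq 𝒜) : Seq 𝒜 := fun i => x (i + 1)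

/-- The inverse of the left shift map. -/
def shiftInv (x : Seq 𝒜) : Seq 𝒜 := fun i => x (i - 1)

/-- `n`-th power of the shift, `n : ℤ`. -/
def shiftZ (n : ℤ) (x : Seq 𝒜) : Seq 𝒜 := fun i => x (i + n)

/-- The subshift of finite type with transition rule `H`. -/
def SFT (H : 𝒜 → 𝒜 → Prop) : Set (Seq 𝒜) := {x | ∀ i : ℤ, H (x i) (x (i + 1))}

open Classical in
/-- dist(x,y) = 2^{-n}, n = min{|i| : x i ≠ y i}. -/
noncomputable def seqDist (x y : Seq 𝒜) : ℝ :=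
  if x = y then 0
  else (2 : ℝ) ^ (-((sInf {n : ℕ | ∃ i : ℤ, i.natAbs = n ∧ x i ≠ y i} : ℕ) : ℤ))

/-- Transitivity: some point has dense forward orbit in `Σ_H`. -/
def IsTransitive (H : 𝒜 → 𝒜 → Prop) : Prop :=
  ∃ x ∈ SFT H, ∀ y ∈ SFT H, ∀ ε : ℝ, 0 < ε → ∃ n : ℕ, seqDist (shift^[n] x) y < ε

/-- The number of words of length `n` appearing in sequences of `X`. -/
noncomputable def wordCount (X : Set (Seq 𝒜)) (n : ℕ) : ℕ :=
  Nat.card {w : Fin n → 𝒜 // ∃ x ∈ X, ∃ k : ℤ, ∀ i : Fin n, x (k + (i : ℤ)) = w i}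

/-- Topological entropy of the shift restricted to `X`, via word counting. -/
noncomputable def entropy (X : Set (Seq 𝒜)) : ℝ :=
  Filter.atTop.limsup fun n : ℕ => Real.log (wordCount X n : ℝ) / (n : ℝ)

/-- The Euclidean norm on `ℝ^d`. -/
noncomputable def eNorm {d : ℕ} (u : Fin d → ℝ) : ℝ := Real.sqrt (∑ i, (u i) ^ 2)

/-- The operator norm of a matrix, induced by the Euclidean norm. -/
noncomputable def opNorm {d : ℕ} (M : Matrix (Fin d) (Fin d) ℝ) : ℝ :=
  sSup {r : ℝ | ∃ u : Fin d → ℝ, eNorm u = 1 ∧ r = eNorm (M.mulVec u)}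

/-- Forward iterates of a cocycle over the shift: `A_0 = 1`, `A_{n+1}(x) = A_n(σ x) * A x`. -/
def iterN {M : Type*} [Monoid M] (A : Seq 𝒜 → M) : ℕ → Seq 𝒜 → M
  | 0, _ => 1
  | n + 1, x => iterN A n (shift x) * A x

/-- Iterates of a cocycle over the shift, indexed by `ℤ`. -/
noncomputable def iterZ {Gr : Type*} [Group Gr] (A : Seq 𝒜 → Gr) (n : ℤ) (x : Seq 𝒜) : Gr :=
  if 0 ≤ n then iterN A n.toNat x
  else (iterN A (-n).toNat (shiftInv^[(-n).toNat] x))⁻¹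

variable {d : ℕ}

/-- Underlying matrix of an element of `GL(d,ℝ)`. -/
def glMat (g : GL (Fin d) ℝ) : Matrix (Fin d) (Fin d) ℝ := g.val

/-- `B(A,κ)`: points of `Σ_H` whose full orbit is fiberwise bounded by `κ`. -/
noncomputable def BSet (H : 𝒜 → 𝒜 → Prop) (A : Seq 𝒜 → GL (Fin d) ℝ) (κ : ℝ) :
    Set (Seq 𝒜) :=
  {x ∈ SFT H | ∀ n : ℤ, opNorm (glMat (iterZ A n x)) ≤ κ ∧
    opNorm (glMat (iterZ A n x)⁻¹) ≤ κ}

/-- The `C⁰` distance between two cocycles over `Σ_H`. -/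
noncomputable def dC0 (H : 𝒜 → 𝒜 → Prop) (A B : Seq 𝒜 → GL (Fin d) ℝ) : ℝ :=
  sSup {r : ℝ | ∃ x ∈ SFT H, r = opNorm (glMat (A x) - glMat (B x))}

/-- The `C^α` Hölder seminorm of a matrix-valued map on `Σ_H`. -/
noncomputable def holderSemi (H : 𝒜 → 𝒜 → Prop) (f : Seq 𝒜 → Matrix (Fin d) (Fin d) ℝ)
    (α : ℝ) : ℝ :=
  sSup {r : ℝ | ∃ x ∈ SFT H, ∃ y ∈ SFT H, x ≠ y ∧ r = opNorm (f x - f y) / seqDist x y ^ α}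

/-- A cocycle is `α`-Hölder if its `C^α` seminorm is finite. -/
def IsHolder (H : 𝒜 → 𝒜 → Prop) (A : Seq 𝒜 → GL (Fin d) ℝ) (α : ℝ) : Prop :=
  ∃ C : ℝ, ∀ x ∈ SFT H, ∀ y ∈ SFT H,
    opNorm (glMat (A x) - glMat (A y)) ≤ C * seqDist x y ^ α

/-- The `C^α` distance between two cocycles over `Σ_H`. -/
noncomputable def dCalpha (H : 𝒜 → 𝒜 → Prop) (A B : Seq 𝒜 → GL (Fin d) ℝ) (α : ℝ) : ℝ :=
  dC0 H A B + holderSemi H (fun x => glMat (A x) - glMat (B x)) α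

/-- Continuity (with respect to `seqDist`) of a matrix-valued map on `Σ_H`. -/
def MatContinuousOn (H : 𝒜 → 𝒜 → Prop) (f : Seq 𝒜 → Matrix (Fin d) (Fin d) ℝ) : Prop :=
  ∀ x ∈ SFT H, ∀ ε : ℝ, 0 < ε → ∃ δ : ℝ, 0 < δ ∧
    ∀ y ∈ SFT H, seqDist x y < δ → opNorm (f x - f y) < ε

/-- `(σ, A)` is continuously conjugate to an isometric cocycle. -/
def ConjIsometric (H : 𝒜 → 𝒜 → Prop) (A : Seq 𝒜 → GL (Fin d) ℝ) : Prop :=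
  ∃ P : Seq 𝒜 → GL (Fin d) ℝ, MatContinuousOn H (fun x => glMat (P x)) ∧
    ∀ x ∈ SFT H, glMat ((P (shift x))⁻¹ * A x * P x) ∈ Matrix.orthogonalGroup (Fin d) ℝ

/-- `(σ, A)` admits a dominated splitting: a continuous invariant splitting
`ℝ^d = E₁ ⊕ E₂` (encoded by a continuous field of nontrivial idempotents `π` with
`E₁ = range π`, `E₂ = ker π`) with uniformly separated growth rates. -/
def HasDominatedSplitting (H : 𝒜 → 𝒜 → Prop) (A : Seq 𝒜 → GL (Fin d) ℝ) : Prop :=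
  ∃ π : Seq 𝒜 → Matrix (Fin d) (Fin d) ℝ,
    MatContinuousOn H π ∧
    (∀ x ∈ SFT H, π x * π x = π x ∧ π x ≠ 0 ∧ π x ≠ 1) ∧
    (∀ x ∈ SFT H, glMat (A x) * π x = π (shift x) * glMat (A x)) ∧
    ∃ C : ℝ, 0 < C ∧ ∃ lam : ℝ, 0 < lam ∧ lam < 1 ∧
      ∀ x ∈ SFT H, ∀ n : ℕ, 1 ≤ n →
        ∀ u ∈ LinearMap.range (π x).mulVecLin, ∀ v ∈ LinearMap.ker (π x).mulVecLin,
          eNorm ((glMat (iterN A n x)).mulVec u) * eNorm v ≤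
            C * lam ^ n * (eNorm u * eNorm ((glMat (iterN A n x)).mulVec v))

/-- `H`-admissible finite words. -/
def Adm (H : 𝒜 → 𝒜 → Prop) (w : List 𝒜) : Prop := w.Chain' H

/-- The word `(x_{-k}, …, x_k)` read in the sequence `x`. -/
def window (k : ℕ) (x : Seq 𝒜) : List 𝒜 :=
  (List.range (2 * k + 1)).map fun i => x ((i : ℤ) - (k : ℤ))

/-- `w` is a transition from `a` to `b`: an admissible word with prefix `a` and suffix `b`. -/
def IsTransition (H : 𝒜 → 𝒜 → Prop) (a b w : List 𝒜) : Prop :=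
  Adm H w ∧ a <+: w ∧ b <:+ w

/-- The product `A_[w⟩ = φ(w⁽ⁿ⁻²ᵏ⁾) ⋯ φ(w⁽¹⁾)` of a locally constant cocycle
represented by `φ` along the walk `w`. -/
def transProd {M : Type*} [Monoid M] (φ : List 𝒜 → M) (k : ℕ) (w : List 𝒜) : M :=
  (((List.range (w.length - 2 * k)).map fun i => φ ((w.drop i).take (2 * k + 1))).reverse).prod

section SubgroupCocycle

variable {G : Subgroup (GL (Fin d) ℝ)}

/-- Underlying matrix of an element of the subgroup `G ⊂ GL(d,ℝ)`. -/
def subMat (g : ↥G) : Matrix (Fin d) (Fin d) ℝ := ((g : GL (Fin d) ℝ) : Matrix (Fin d) (Fin d) ℝ)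

/-- `B(A,κ)` for `G`-valued cocycles. -/
noncomputable def BSetSub (H : 𝒜 → 𝒜 → Prop) (A : Seq 𝒜 → ↥G) (κ : ℝ) : Set (Seq 𝒜) :=
  {x ∈ SFT H | ∀ n : ℤ, opNorm (subMat (iterZ A n x)) ≤ κ ∧
    opNorm (subMat (iterZ A n x)⁻¹) ≤ κ}

/-- `C⁰` distance for `G`-valued cocycles. -/
noncomputable def dC0Sub (H : 𝒜 → 𝒜 → Prop) (A B : Seq 𝒜 → ↥G) : ℝ :=
  sSup {r : ℝ | ∃ x ∈ SFT H, r = opNorm (subMat (A x) - subMat (B x))}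

/-- `α`-Hölder condition for `G`-valued cocycles. -/
def IsHolderSub (H : 𝒜 → 𝒜 → Prop) (A : Seq 𝒜 → ↥G) (α : ℝ) : Prop :=
  ∃ C : ℝ, ∀ x ∈ SFT H, ∀ y ∈ SFT H,
    opNorm (subMat (A x) - subMat (A y)) ≤ C * seqDist x y ^ α

/-- `C^α` distance for `G`-valued cocycles. -/
noncomputable def dCalphaSub (H : 𝒜 → 𝒜 → Prop) (A B : Seq 𝒜 → ↥G) (α : ℝ) : ℝ :=
  dC0Sub H A B + holderSemi H (fun x => subMat (A x) - subMat (B x)) α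

/-- The covering condition for a locally constant `G`-cocycle represented by `φ`
(depending on positions in `⟦-k, k⟧`). -/
def CoveringCond (H : 𝒜 → 𝒜 → Prop) (φ : List 𝒜 → ↥G) (k : ℕ) : Prop :=
  ∃ U : Set ↥G, U.Nonempty ∧ IsOpen U ∧ IsCompact (closure U) ∧
    ∃ A' : Set (List 𝒜), A'.Nonempty ∧ (∀ a ∈ A', Adm H a ∧ a.length = 2 * k + 1) ∧
      ∀ a ∈ A', closure U ⊆
        ⋃ b ∈ A', ⋃ w ∈ {w : List 𝒜 | IsTransition H a b w}, (fun u => (transProd φ k w)⁻¹ * u) '' U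

/-- `w₁` is a proper prefix of `w₂`. -/
def ProperPrefix (w₁ w₂ : List 𝒜) : Prop := w₁ <+: w₂ ∧ w₁ ≠ w₂

/-- The multiple covering condition of `m` layers for a locally constant `G`-cocycle
represented by `φ` (depending on positions in `⟦-k, k⟧`). -/
def MultiCoveringCond (H : 𝒜 → 𝒜 → Prop) (φ : List 𝒜 → ↥G) (k : ℕ) (m : ℕ) : Prop :=
  ∃ n : ℕ, 0 < n ∧ ∃ U : Fin n → Set ↥G,
    (∀ ι, (U ι).Nonempty ∧ IsOpen (U ι) ∧ IsCompact (closure (U ι))) ∧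
    ∃ A' : Set (List 𝒜), A'.Nonempty ∧ (∀ a ∈ A', Adm H a ∧ a.length = 2 * k + 1) ∧
      ∃ Λ : List 𝒜 → Fin n → Fin m → Set (List 𝒜),
        (∀ a ∈ A', ∀ ι jj, (Λ a ι jj).Nonempty ∧
          Λ a ι jj ⊆ {w : List 𝒜 | ∃ b ∈ A', IsTransition H a b w}) ∧
        (∀ a ∈ A', ∀ ι : Fin n, ∀ j₁ j₂ : Fin m, ∀ w₁ ∈ Λ a ι j₁, ∀ w₂ ∈ Λ a ι j₂,
          ¬ ProperPrefix w₁ w₂) ∧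
        (∀ a ∈ A', ∀ ι jj, closure (U ι) ⊆
          ⋃ w ∈ Λ a ι jj, (fun u => (transProd φ k w)⁻¹ * u) '' (⋃ ι', U ι'))

/-- The ball of radius `r` around the identity in `G`. -/
noncomputable def GBall (G : Subgroup (GL (Fin d) ℝ)) (r : ℝ) : Set ↥G :=
  {g : ↥G | opNorm (subMat g - 1) < r}

end SubgroupCocycle

/-- `P_[w] = g_k ⋯ g_1` for `w = (g_1, …, g_k)`. -/
def prodMap {M : Type*} [Monoid M] {k : ℕ} (w : Fin k → M) : M :=
  ((List.ofFn w).reverse).prod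

/-- The local unstable set of `y` in `Σ_H`. -/
def WuLoc (H : 𝒜 → 𝒜 → Prop) (y : Seq 𝒜) : Set (Seq 𝒜) :=
  {z ∈ SFT H | ∀ i : ℤ, i ≤ 0 → z i = y i}


section QCBranch

variable {d : ℕ}

/-- The product `D_k ⋯ D_1` of the first `k` terms of a sequence of matrices. -/
def seqProd (D : ℕ → Matrix (Fin d) (Fin d) ℝ) (k : ℕ) : Matrix (Fin d) (Fin d) ℝ :=
  (((List.range k).map D).reverse).prod

/-- The semigroup generated by `𝒢 ⊆ SL(d,ℝ)` has a quasi-conformal branch. -/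
def HasQCBranch (𝒢 : Set (Matrix (Fin d) (Fin d) ℝ)) : Prop :=
  ∃ D : ℕ → Matrix (Fin d) (Fin d) ℝ, (∀ i : ℕ, D i ∈ 𝒢) ∧
    ∃ C : ℝ, ∀ k : ℕ, opNorm (seqProd D k) * opNorm (seqProd D k)⁻¹ ≤ C


section QCAuxProof

variable {d : ℕ}

/-- Frobenius-type norm used as an upper bound for `opNorm`. -/
noncomputable def frobN (M : Matrix (Fin d) (Fin d) ℝ) : ℝ :=
  Real.sqrt (∑ i, ∑ j, (M i j) ^ 2)

lemma frobN_nonneg (M : Matrix (Fin d) (Fin d) ℝ) : 0 ≤ frobN M := Real.sqrt_nonneg _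

lemma eNorm_nonneg (u : Fin d → ℝ) : 0 ≤ eNorm u := Real.sqrt_nonneg _

lemma eNorm_mulVec_le (M : Matrix (Fin d) (Fin d) ℝ) (v : Fin d → ℝ) :
    eNorm (M.mulVec v) ≤ frobN M * eNorm v := by
  rw [eNorm, eNorm, frobN, ← Real.sqrt_mul (by positivity)]
  apply Real.sqrt_le_sqrt
  rw [Finset.sum_mul]
  refine Finset.sum_le_sum fun i _ => ?_
  have h : M.mulVec v i = ∑ j, M i j * v j := by
    simp [Matrix.mulVec, dotProduct]
  rw [h]
  exact Finset.sum_mul_sq_le_sq_mul_sq _ _ _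

lemma opNorm_nonneg (M : Matrix (Fin d) (Fin d) ℝ) : 0 ≤ opNorm M := by
  apply Real.sSup_nonneg
  rintro r ⟨u, -, rfl⟩
  exact eNorm_nonneg _

lemma opNorm_le_frobN (M : Matrix (Fin d) (Fin d) ℝ) : opNorm M ≤ frobN M := by
  apply Real.sSup_le _ (frobN_nonneg M)
  rintro r ⟨u, hu, rfl⟩
  simpa [hu] using eNorm_mulVec_le M u

lemma opNorm_bddAbove (M : Matrix (Fin d) (Fin d) ℝ) :
    BddAbove {r : ℝ | ∃ u : Fin d → ℝ, eNorm u = 1 ∧ r = eNorm (M.mulVec u)} := by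
  refine ⟨frobN M, ?_⟩
  rintro r ⟨u, hu, rfl⟩
  simpa [hu] using eNorm_mulVec_le M u

lemma eNorm_single (j : Fin d) : eNorm (Pi.single j (1 : ℝ)) = 1 := by
  rw [eNorm]
  have h : ∀ i : Fin d, ((Pi.single j (1 : ℝ) : Fin d → ℝ) i) ^ 2 = (if i = j then (1:ℝ) else 0) := by
    intro i; rw [Pi.single_apply]; split <;> simp
  simp [h]

lemma abs_entry_le_opNorm (M : Matrix (Fin d) (Fin d) ℝ) (i j : Fin d) :
    |M i j| ≤ opNorm M := by
  have hmem : eNorm (M.mulVec (Pi.single j (1:ℝ))) ∈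
      {r : ℝ | ∃ u : Fin d → ℝ, eNorm u = 1 ∧ r = eNorm (M.mulVec u)} :=
    ⟨Pi.single j (1:ℝ), eNorm_single j, rfl⟩
  refine le_trans ?_ (le_csSup (opNorm_bddAbove M) hmem)
  have h : M.mulVec (Pi.single j (1:ℝ)) = fun i' => M i' j := by simp; rfl
  rw [eNorm, h, ← Real.sqrt_sq_eq_abs]
  exact Real.sqrt_le_sqrt
    (Finset.single_le_sum (f := fun i' => (M i' j) ^ 2)
      (fun i' _ => sq_nonneg (M i' j)) (Finset.mem_univ i))

lemma abs_det_le_opNorm (M : Matrix (Fin d) (Fin d) ℝ) :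
    |M.det| ≤ (d.factorial : ℝ) * opNorm M ^ d := by
  rw [Matrix.det_apply]
  calc |∑ σ : Equiv.Perm (Fin d), Equiv.Perm.sign σ • ∏ i, M (σ i) i|
      ≤ ∑ σ : Equiv.Perm (Fin d), |Equiv.Perm.sign σ • ∏ i, M (σ i) i| :=
        Finset.abs_sum_le_sum_abs _ _
    _ ≤ ∑ _σ : Equiv.Perm (Fin d), opNorm M ^ d := by
        refine Finset.sum_le_sum fun σ _ => ?_
        have h1 : |Equiv.Perm.sign σ • ∏ i, M (σ i) i| = |∏ i, M (σ i) i| := by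
          rcases Int.units_eq_one_or (Equiv.Perm.sign σ) with h | h <;>
            simp [h, Units.smul_def]
        rw [h1, Finset.abs_prod]
        calc ∏ i, |M (σ i) i| ≤ ∏ _i : Fin d, opNorm M :=
              Finset.prod_le_prod (fun _ _ => abs_nonneg _)
                (fun i _ => abs_entry_le_opNorm M (σ i) i)
          _ = opNorm M ^ d := by simp
    _ = (d.factorial : ℝ) * opNorm M ^ d := by
        rw [Finset.sum_const, Finset.card_univ, Fintype.card_perm, nsmul_eq_mul]
        simp

lemma opNorm_lower_of_det_one (hd : 0 < d) (M : Matrix (Fin d) (Fin d) ℝ)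
    (hdet : M.det = 1) : 1 / (d.factorial : ℝ) ≤ opNorm M := by
  have hF : (0 : ℝ) < (d.factorial : ℝ) := by
    exact_mod_cast d.factorial_pos
  have hF1 : (1 : ℝ) ≤ (d.factorial : ℝ) := by
    exact_mod_cast d.factorial_pos
  have h1 : 1 ≤ (d.factorial : ℝ) * opNorm M ^ d := by
    have := abs_det_le_opNorm M
    rw [hdet] at this
    simpa using this
  have ht := opNorm_nonneg M
  rcases le_or_gt 1 (opNorm M) with h | h
  · calc 1 / (d.factorial : ℝ) ≤ 1 := by
          rw [div_le_one hF]; exact hF1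
      _ ≤ opNorm M := h
  · have hp : opNorm M ^ d ≤ opNorm M := pow_le_of_le_one ht h.le hd.ne'
    have h2 : 1 ≤ (d.factorial : ℝ) * opNorm M := by nlinarith
    rw [div_le_iff₀ hF]
    linarith [h2, mul_comm (d.factorial : ℝ) (opNorm M)]

lemma seqProd_zero (D : ℕ → Matrix (Fin d) (Fin d) ℝ) : seqProd D 0 = 1 := by
  simp [seqProd]

lemma seqProd_succ (D : ℕ → Matrix (Fin d) (Fin d) ℝ) (k : ℕ) :
    seqProd D (k + 1) = D k * seqProd D k := by
  simp [seqProd, List.range_succ]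

lemma continuous_frobN : Continuous (frobN (d := d)) := by
  apply Real.continuous_sqrt.comp
  refine continuous_finset_sum _ fun i _ => continuous_finset_sum _ fun j _ => ?_
  exact ((continuous_apply j).comp (continuous_apply i)).pow 2

lemma opNorm_dzero (M : Matrix (Fin 0) (Fin 0) ℝ) : opNorm M = 0 := by
  have h : {r : ℝ | ∃ u : Fin 0 → ℝ, eNorm u = 1 ∧ r = eNorm (M.mulVec u)} = ∅ := by
    ext r
    simp only [Set.mem_setOf_eq, Set.mem_empty_iff_false, iff_false]
    rintro ⟨u, hu, -⟩
    rw [eNorm] at hu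
    simp at hu
  rw [opNorm, h, Real.sSup_empty]

lemma inv_eq_adjugate_of_det_one (M : Matrix (Fin d) (Fin d) ℝ) (h : M.det = 1) :
    M⁻¹ = M.adjugate := by
  rw [Matrix.inv_def, h, Ring.inverse_one, one_smul]

end QCAuxProof

/-- Lemma 3.1, [FNR]. For a finite `𝒢 ⊆ SL(d,ℝ)`, the semigroup
`⟨𝒢⟩⁺` has a quasi-conformal branch iff there is a nonempty `𝒰 ⊆ SL(d,ℝ)` with compact
closure such that `cl(𝒰) ⊆ 𝒢⁻¹𝒰`. -/
theorem statement14 (𝒢 : Set (Matrix (Fin d) (Fin d) ℝ)) (h𝒢fin : 𝒢.Finite)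
    (h𝒢SL : ∀ g ∈ 𝒢, g.det = 1) :
    HasQCBranch 𝒢 ↔
      ∃ 𝒰 : Set (Matrix (Fin d) (Fin d) ℝ), 𝒰.Nonempty ∧ (∀ u ∈ 𝒰, u.det = 1) ∧
        IsCompact (closure 𝒰) ∧ closure 𝒰 ⊆ 𝒢⁻¹ * 𝒰 := by
  constructor
  · rintro ⟨D, hD, C, hC⟩
    by_cases hd0 : d = 0
    · subst hd0
      have huniv : ∀ M N : Matrix (Fin 0) (Fin 0) ℝ, M = N := fun M N => Subsingleton.elim M N
      refine ⟨{1}, ⟨1, rfl⟩, ?_, ?_, ?_⟩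
      · intro u hu; rw [Set.mem_singleton_iff] at hu; rw [hu]; exact Matrix.det_isEmpty
      · have : closure {(1 : Matrix (Fin 0) (Fin 0) ℝ)} = {1} := by
          apply Set.Subset.antisymm
          · intro x _; rw [Set.mem_singleton_iff]; exact huniv x 1
          · exact subset_closure
        rw [this]; exact isCompact_singleton
      · intro L _
        refine Set.mem_mul.mpr ⟨(D 0)⁻¹, ?_, 1, rfl, ?_⟩
        · rw [Set.mem_inv, huniv (D 0)⁻¹⁻¹ (D 0)]; exact hD 0
        · exact huniv _ _
    have hd : 0 < d := Nat.pos_of_ne_zero hd0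
    have hdet : ∀ k, (seqProd D k).det = 1 := by
      intro k
      induction k with
      | zero => rw [seqProd_zero]; exact Matrix.det_one
      | succ k ih => rw [seqProd_succ, Matrix.det_mul, ih, h𝒢SL _ (hD k), one_mul]
    have hdetinv : ∀ k, ((seqProd D k)⁻¹).det = 1 := by
      intro k
      rw [Matrix.det_nonsing_inv, hdet k, Ring.inverse_one]
    have hF : (0 : ℝ) < (d.factorial : ℝ) := by exact_mod_cast d.factorial_pos
    have hbound : ∀ k, opNorm (seqProd D k) ≤ C * (d.factorial : ℝ) := by
      intro k
      have h2 := opNorm_lower_of_det_one hd _ (hdetinv k)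
      have h3 := opNorm_nonneg (seqProd D k)
      have h4 : opNorm (seqProd D k) * (1 / (d.factorial : ℝ)) ≤ C :=
        le_trans (mul_le_mul_of_nonneg_left h2 h3) (hC k)
      calc opNorm (seqProd D k)
          = opNorm (seqProd D k) * (1 / (d.factorial : ℝ)) * (d.factorial : ℝ) := by
            field_simp
        _ ≤ C * (d.factorial : ℝ) := mul_le_mul_of_nonneg_right h4 hF.le
    set S : Set (Matrix (Fin d) (Fin d) ℝ) := Set.range (seqProd D) with hS
    refine ⟨closure S, ⟨seqProd D 0, subset_closure ⟨0, rfl⟩⟩, ?_, ?_, ?_⟩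
    · intro u hu
      refine (isClosed_eq (continuous_id.matrix_det) continuous_const).closure_subset_iff.mpr
        ?_ hu
      rintro v ⟨k, rfl⟩
      exact hdet k
    · rw [closure_closure]
      set B := C * (d.factorial : ℝ) with hB
      set K : Set (Matrix (Fin d) (Fin d) ℝ) :=
        Set.univ.pi (fun _ : Fin d => Set.univ.pi fun _ : Fin d => Set.Icc (-B) B) with hK
      have hKc : IsCompact K :=
        isCompact_univ_pi fun _ => isCompact_univ_pi fun _ => isCompact_Icc
      have hKcl : IsClosed K :=
        isClosed_set_pi fun _ _ => isClosed_set_pi fun _ _ => isClosed_Icc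
      have hSK : S ⊆ K := by
        rintro M ⟨k, rfl⟩
        rw [hK]; apply Set.mem_univ_pi.mpr
        intro i
        rw [Set.mem_univ_pi]
        intro j
        rw [Set.mem_Icc, ← abs_le]
        exact (abs_entry_le_opNorm _ i j).trans (hbound k)
      exact hKc.of_isClosed_subset isClosed_closure (hKcl.closure_subset_iff.mpr hSK)
    · rw [closure_closure]
      intro L hL
      have hSdecomp : S = ⋃ gg ∈ 𝒢, {M | ∃ k, D k = gg ∧ seqProd D k = M} := by
        ext M
        constructor
        · rintro ⟨k, rfl⟩
          exact Set.mem_biUnion (hD k) ⟨k, rfl, rfl⟩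
        · intro hM
          rw [Set.mem_iUnion₂] at hM
          obtain ⟨gg, -, k, -, rfl⟩ := hM
          exact ⟨k, rfl⟩
      rw [hSdecomp, h𝒢fin.closure_biUnion] at hL
      rw [Set.mem_iUnion₂] at hL
      obtain ⟨gg, hgg𝒢, hLg⟩ := hL
      have hginv : IsUnit gg.det := by rw [h𝒢SL _ hgg𝒢]; exact isUnit_one
      have hmul : gg * L ∈ closure S := by
        have hcont : Continuous fun M : Matrix (Fin d) (Fin d) ℝ => gg * M :=
          continuous_const.matrix_mul continuous_id
        have h1 : gg * L ∈
            (fun M => gg * M) '' closure {M | ∃ k, D k = gg ∧ seqProd D k = M} :=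
          ⟨L, hLg, rfl⟩
        have h2 := (image_closure_subset_closure_image hcont) h1
        refine closure_mono ?_ h2
        rintro M ⟨N, ⟨k, hk, rfl⟩, rfl⟩
        exact ⟨k + 1, by rw [seqProd_succ, hk]⟩
      refine Set.mem_mul.mpr ⟨gg⁻¹, ?_, gg * L, hmul, ?_⟩
      · rw [Set.mem_inv, Matrix.nonsing_inv_nonsing_inv gg hginv]
        exact hgg𝒢
      · rw [← Matrix.mul_assoc, Matrix.nonsing_inv_mul gg hginv, Matrix.one_mul]
  · rintro ⟨𝒰, ⟨u₀, hu₀⟩, h𝒰SL, h𝒰cpt, h𝒰sub⟩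
    by_cases hd0 : d = 0
    · subst hd0
      obtain ⟨a, ha, b, hb, hab⟩ := Set.mem_mul.mp (h𝒰sub (subset_closure hu₀))
      refine ⟨fun _ => a⁻¹, fun _ => Set.mem_inv.mp ha, 0, fun k => ?_⟩
      rw [opNorm_dzero, opNorm_dzero, mul_zero]
    have hd : 0 < d := Nat.pos_of_ne_zero hd0
    have hu₀det : IsUnit u₀.det := by rw [h𝒰SL _ hu₀]; exact isUnit_one
    have step : ∀ u ∈ 𝒰, ∃ g ∈ 𝒢, g * u ∈ 𝒰 := by
      intro u hu
      obtain ⟨a, ha, b, hb, hab⟩ := Set.mem_mul.mp (h𝒰sub (subset_closure hu))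
      have hg : a⁻¹ ∈ 𝒢 := Set.mem_inv.mp ha
      have hadet : IsUnit a.det := by
        by_contra h
        have h1 : (a⁻¹).det = 1 := h𝒢SL _ hg
        rw [Matrix.det_nonsing_inv, Ring.inverse_non_unit _ h] at h1
        exact zero_ne_one h1
      refine ⟨a⁻¹, hg, ?_⟩
      have : a⁻¹ * u = b := by
        rw [← hab, ← Matrix.mul_assoc, Matrix.nonsing_inv_mul a hadet, Matrix.one_mul]
      rw [this]
      exact hb
    choose! g hg hstep using step
    set useq : ℕ → Matrix (Fin d) (Fin d) ℝ :=
      fun k => Nat.rec u₀ (fun _ v => g v * v) k with huseqdef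
    have huseq_succ : ∀ k, useq (k + 1) = g (useq k) * useq k := fun k => rfl
    have huseq : ∀ k, useq k ∈ 𝒰 := by
      intro k
      induction k with
      | zero => exact hu₀
      | succ k ih => rw [huseq_succ]; exact hstep _ ih
    set D : ℕ → Matrix (Fin d) (Fin d) ℝ := fun k => g (useq k) with hDdef
    have hD : ∀ k, D k ∈ 𝒢 := fun k => hg _ (huseq k)
    have hprod : ∀ k, seqProd D k = useq k * u₀⁻¹ := by
      intro k
      induction k with
      | zero =>
        rw [seqProd_zero]
        exact (Matrix.mul_nonsing_inv u₀ hu₀det).symm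
      | succ k ih =>
        rw [seqProd_succ, ih, huseq_succ, Matrix.mul_assoc]
    have hadj : ∀ k, (useq k)⁻¹ = (useq k).adjugate := fun k =>
      inv_eq_adjugate_of_det_one _ (h𝒰SL _ (huseq k))
    obtain ⟨z₁, hz₁, hmax₁⟩ := h𝒰cpt.exists_isMaxOn ⟨u₀, subset_closure hu₀⟩
      (Continuous.continuousOn
        (continuous_frobN.comp ((continuous_id.matrix_mul continuous_const :
          Continuous fun u : Matrix (Fin d) (Fin d) ℝ => u * u₀⁻¹))))
    obtain ⟨z₂, hz₂, hmax₂⟩ := h𝒰cpt.exists_isMaxOn ⟨u₀, subset_closure hu₀⟩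
      (Continuous.continuousOn
        (continuous_frobN.comp ((continuous_const.matrix_mul continuous_id.matrix_adjugate :
          Continuous fun u : Matrix (Fin d) (Fin d) ℝ => u₀ * u.adjugate))))
    refine ⟨D, hD, frobN (z₁ * u₀⁻¹) * frobN (u₀ * z₂.adjugate), fun k => ?_⟩
    have h1 : opNorm (seqProd D k) ≤ frobN (z₁ * u₀⁻¹) := by
      rw [hprod]
      exact (opNorm_le_frobN _).trans (isMaxOn_iff.mp hmax₁ _ (subset_closure (huseq k)))
    have h2 : opNorm (seqProd D k)⁻¹ ≤ frobN (u₀ * z₂.adjugate) := by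
      rw [hprod, Matrix.mul_inv_rev, Matrix.nonsing_inv_nonsing_inv u₀ hu₀det, hadj k]
      exact (opNorm_le_frobN _).trans (isMaxOn_iff.mp hmax₂ _ (subset_closure (huseq k)))
    exact mul_le_mul h1 h2 (opNorm_nonneg _) (frobN_nonneg _)

end QCBranch

end Paper
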